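/- Let p, q ∈ [1,+∞] satisfy 1/p + 1/q = 1. Let f = f(ζ,η) be a measurable function on ℝⁿ×ℝⁿ with A := sup_{η∈ℝⁿ} ‖f(·,η)‖_{L^p(ℝⁿ)} < ∞, and let F = F(ζ,η) be measurable on ℝⁿ×ℝⁿ with B := sup_{ζ∈ℝⁿ} ‖F(ζ,·)‖_{L^q(ℝⁿ)} < ∞. Then for every g ∈ L^p(ℝⁿ) the function Tg(ξ) = ∫_{ℝⁿ} F(ξ,η) f(ξ−η,η) g(η) dη is well defined for almost every ξ, belongs to L^p(ℝⁿ), and satisfies ‖Tg‖_{L^p} ≤ A·B·‖g‖_{L^p}. -/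

import Mathlib

open MeasureTheory
open scoped ENNReal

private theorem integralOperator_Lp_bound_aux {n : ℕ} (p q : ℝ≥0∞)
    (hp : 1 ≤ p) (hq : 1 ≤ q) (hpq : p⁻¹ + q⁻¹ = 1)
    (f F : EuclideanSpace ℝ (Fin n) → EuclideanSpace ℝ (Fin n) → ℂ)
    (hf_meas : Measurable (Function.uncurry f))
    (hF_meas : Measurable (Function.uncurry F))
    (hA : (⨆ η, eLpNorm (fun ζ => f ζ η) p volume) < ⊤)
    (hB : (⨆ ζ, eLpNorm (fun η => F ζ η) q volume) < ⊤)
    (g : EuclideanSpace ℝ (Fin n) → ℂ) (hg_meas : Measurable g) (hg : MemLp g p volume) :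
    (∀ᵐ ξ ∂volume, Integrable (fun η => F ξ η * f (ξ - η) η * g η) volume) ∧
    MemLp (fun ξ => ∫ η, F ξ η * f (ξ - η) η * g η ∂volume) p volume ∧
    eLpNorm (fun ξ => ∫ η, F ξ η * f (ξ - η) η * g η ∂volume) p volume ≤
      (⨆ η, eLpNorm (fun ζ => f ζ η) p volume) *
      (⨆ ζ, eLpNorm (fun η => F ζ η) q volume) * eLpNorm g p volume := by
  have hfξ : ∀ ξ, Measurable fun η => f (ξ - η) η := fun ξ =>
    hf_meas.comp ((measurable_const.sub measurable_id).prodMk measurable_id)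
  have hFξ : ∀ ξ, Measurable (F ξ) := fun ξ => hF_meas.comp measurable_prodMk_left
  have hwξ : ∀ ξ, Measurable fun η => f (ξ - η) η * g η := fun ξ => (hfξ ξ).mul hg_meas
  have hone : (1 : ℝ≥0∞) / 1 = 1 / q + 1 / p := by
    rw [one_div_one, one_div, one_div, ← hpq, add_comm]
  -- Hölder in `η`, for each fixed `ξ`
  have hHolder : ∀ ξ, (∫⁻ η, (‖F ξ η * f (ξ - η) η * g η‖₊ : ℝ≥0∞) ∂volume)
      ≤ (⨆ ζ, eLpNorm (fun η => F ζ η) q volume) *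
        eLpNorm (fun η => f (ξ - η) η * g η) p volume := by
    intro ξ
    haveI : ENNReal.HolderTriple q p 1 := ⟨by rw [inv_one, add_comm]; exact hpq⟩
    have h := eLpNorm_le_eLpNorm_mul_eLpNorm'_of_norm (μ := volume) (p := q) (q := p) (r := 1) ((hFξ ξ).aestronglyMeasurable)
      ((hwξ ξ).aestronglyMeasurable) (· * ·) 1
      (Filter.Eventually.of_forall fun η => by rw [NNReal.coe_one, one_mul]; exact le_of_eq (norm_mul _ _))
    rw [eLpNorm_one_eq_lintegral_enorm] at h
    calc (∫⁻ η, (‖F ξ η * f (ξ - η) η * g η‖₊ : ℝ≥0∞) ∂volume)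
        = ∫⁻ η, (‖F ξ η * (f (ξ - η) η * g η)‖₊ : ℝ≥0∞) ∂volume := by
          simp_rw [mul_assoc]
      _ ≤ eLpNorm (F ξ) q volume * eLpNorm (fun η => f (ξ - η) η * g η) p volume := by simpa only [ENNReal.coe_one, one_mul, enorm_eq_nnnorm] using h
      _ ≤ (⨆ ζ, eLpNorm (fun η => F ζ η) q volume) *
          eLpNorm (fun η => f (ξ - η) η * g η) p volume :=
        mul_le_mul_left (le_iSup (fun ζ => eLpNorm (fun η => F ζ η) q volume) ξ) _
  have hTg_ptwise : ∀ ξ, (‖∫ η, F ξ η * f (ξ - η) η * g η ∂volume‖₊ : ℝ≥0∞)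
      ≤ (⨆ ζ, eLpNorm (fun η => F ζ η) q volume) *
        eLpNorm (fun η => f (ξ - η) η * g η) p volume := fun ξ =>
    (enorm_integral_le_lintegral_enorm _).trans (hHolder ξ)
  -- the main estimates
  have main : (∀ᵐ ξ ∂(volume : Measure (EuclideanSpace ℝ (Fin n))),
        eLpNorm (fun η => f (ξ - η) η * g η) p volume < ⊤) ∧
      eLpNorm (fun ξ => ∫ η, F ξ η * f (ξ - η) η * g η ∂volume) p volume ≤
        (⨆ η, eLpNorm (fun ζ => f ζ η) p volume) *
        (⨆ ζ, eLpNorm (fun η => F ζ η) q volume) * eLpNorm g p volume := by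
    by_cases hp_top : p = ⊤
    · subst hp_top
      -- a.e. bound on `f` along the shear
      have hfA : ∀ η, ∀ᵐ ζ ∂(volume : Measure (EuclideanSpace ℝ (Fin n))),
          (‖f ζ η‖₊ : ℝ≥0∞) ≤ ⨆ η', eLpNorm (fun ζ => f ζ η') ⊤ volume := by
        intro η
        have h1 : eLpNorm (fun ζ => f ζ η) ⊤ volume
            ≤ ⨆ η', eLpNorm (fun ζ => f ζ η') ⊤ volume :=
          le_iSup (fun η' => eLpNorm (fun ζ => f ζ η') ⊤ volume) η
        rw [eLpNorm_exponent_top] at h1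
        exact ae_le_eLpNormEssSup.mono fun ζ hζ => le_trans hζ h1
      set A := ⨆ η', eLpNorm (fun ζ => f ζ η') ⊤ volume with hA_def
      have hS_meas : MeasurableSet {z : EuclideanSpace ℝ (Fin n) × EuclideanSpace ℝ (Fin n) |
          A < (‖f z.1 z.2‖₊ : ℝ≥0∞)} :=
        measurableSet_lt measurable_const hf_meas.enorm
      have hS'_meas : MeasurableSet {z : EuclideanSpace ℝ (Fin n) × EuclideanSpace ℝ (Fin n) |
          A < (‖f z.2 z.1‖₊ : ℝ≥0∞)} :=
        measurableSet_lt measurable_const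
          ((hf_meas.comp (measurable_snd.prodMk measurable_fst))).enorm
      have hS'0 : (volume.prod volume) {z : EuclideanSpace ℝ (Fin n) × EuclideanSpace ℝ (Fin n) |
          A < (‖f z.2 z.1‖₊ : ℝ≥0∞)} = 0 := by
        rw [Measure.measure_prod_null hS'_meas]
        refine Filter.Eventually.of_forall fun η => ?_
        simp only [Pi.zero_apply]
        have h2 := hfA η
        rw [ae_iff] at h2
        convert h2 using 2
        ext ζ
        simp [not_le]
      have hS0 : (volume.prod volume) {z : EuclideanSpace ℝ (Fin n) × EuclideanSpace ℝ (Fin n) |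
          A < (‖f z.1 z.2‖₊ : ℝ≥0∞)} = 0 := by
        have hswap : MeasurePreserving (Prod.swap)
            ((volume : Measure (EuclideanSpace ℝ (Fin n))).prod volume) (volume.prod volume) :=
          Measure.measurePreserving_swap (μ := (volume : Measure (EuclideanSpace ℝ (Fin n))))
            (ν := (volume : Measure (EuclideanSpace ℝ (Fin n))))
        have heq : {z : EuclideanSpace ℝ (Fin n) × EuclideanSpace ℝ (Fin n) |
              A < (‖f z.1 z.2‖₊ : ℝ≥0∞)}
            = Prod.swap ⁻¹' {z : EuclideanSpace ℝ (Fin n) × EuclideanSpace ℝ (Fin n) |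
              A < (‖f z.2 z.1‖₊ : ℝ≥0∞)} := rfl
        rw [heq, hswap.measure_preimage hS'_meas.nullMeasurableSet, hS'0]
      have hT_meas : MeasurableSet {z : EuclideanSpace ℝ (Fin n) × EuclideanSpace ℝ (Fin n) |
          A < (‖f (z.1 - z.2) z.2‖₊ : ℝ≥0∞)} :=
        measurableSet_lt measurable_const
          (hf_meas.comp ((measurable_fst.sub measurable_snd).prodMk measurable_snd)).enorm
      have hT0 : (volume.prod volume) {z : EuclideanSpace ℝ (Fin n) × EuclideanSpace ℝ (Fin n) |
          A < (‖f (z.1 - z.2) z.2‖₊ : ℝ≥0∞)} = 0 := by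
        have heq : {z : EuclideanSpace ℝ (Fin n) × EuclideanSpace ℝ (Fin n) |
              A < (‖f (z.1 - z.2) z.2‖₊ : ℝ≥0∞)}
            = (fun z : EuclideanSpace ℝ (Fin n) × EuclideanSpace ℝ (Fin n) => (z.1 - z.2, z.2)) ⁻¹'
              {z : EuclideanSpace ℝ (Fin n) × EuclideanSpace ℝ (Fin n) |
                A < (‖f z.1 z.2‖₊ : ℝ≥0∞)} := rfl
        rw [heq, (measurePreserving_sub_prod volume volume).measure_preimage
          hS_meas.nullMeasurableSet, hS0]
      have hshear : ∀ᵐ ξ ∂(volume : Measure (EuclideanSpace ℝ (Fin n))), ∀ᵐ η ∂volume,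
          (‖f (ξ - η) η‖₊ : ℝ≥0∞) ≤ A := by
        rw [Measure.measure_prod_null hT_meas] at hT0
        refine hT0.mono fun ξ hξ => ?_
        simp only [Pi.zero_apply] at hξ
        rw [ae_iff]
        convert hξ using 2
        ext η
        simp [not_le, Set.mem_preimage, Set.mem_setOf_eq]
      have hgtop : ∀ᵐ η ∂(volume : Measure (EuclideanSpace ℝ (Fin n))),
          (‖g η‖₊ : ℝ≥0∞) ≤ eLpNorm g ⊤ volume := by
        rw [eLpNorm_exponent_top]
        exact ae_le_eLpNormEssSup
      have hG_le : ∀ᵐ ξ ∂(volume : Measure (EuclideanSpace ℝ (Fin n))),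
          eLpNorm (fun η => f (ξ - η) η * g η) ⊤ volume ≤ A * eLpNorm g ⊤ volume := by
        refine hshear.mono fun ξ hξ => ?_
        rw [eLpNorm_exponent_top]
        refine essSup_le_of_ae_le _ ((hξ.and hgtop).mono fun η hη => ?_)
        calc (‖f (ξ - η) η * g η‖₊ : ℝ≥0∞) = (‖f (ξ - η) η‖₊ : ℝ≥0∞) * ‖g η‖₊ := by
              rw [nnnorm_mul, ENNReal.coe_mul]
          _ ≤ A * eLpNorm g ⊤ volume := mul_le_mul' hη.1 hη.2
      constructor
      · exact hG_le.mono fun ξ hξ => lt_of_le_of_lt hξ (ENNReal.mul_lt_top hA hg.2)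
      · rw [eLpNorm_exponent_top]
        refine essSup_le_of_ae_le _ (hG_le.mono fun ξ hξ => ?_)
        calc (‖∫ η, F ξ η * f (ξ - η) η * g η ∂volume‖₊ : ℝ≥0∞)
            ≤ (⨆ ζ, eLpNorm (fun η => F ζ η) q volume) *
              eLpNorm (fun η => f (ξ - η) η * g η) ⊤ volume := hTg_ptwise ξ
          _ ≤ (⨆ ζ, eLpNorm (fun η => F ζ η) q volume) * (A * eLpNorm g ⊤ volume) :=
              mul_le_mul' le_rfl hξ
          _ = A * (⨆ ζ, eLpNorm (fun η => F ζ η) q volume) * eLpNorm g ⊤ volume := by ring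
    · -- `p` finite
      have hp0 : p ≠ 0 := fun h => by simp [h] at hp
      have hpR : 0 < p.toReal := ENNReal.toReal_pos hp0 hp_top
      set r := p.toReal with hr_def
      have hwmeas : Measurable fun z : EuclideanSpace ℝ (Fin n) × EuclideanSpace ℝ (Fin n) =>
          (‖f (z.1 - z.2) z.2 * g z.2‖₊ : ℝ≥0∞) ^ r :=
        ((hf_meas.comp ((measurable_fst.sub measurable_snd).prodMk measurable_snd)).mul
          (hg_meas.comp measurable_snd)).enorm.pow_const r
      have hwmeas' : Measurable fun z : EuclideanSpace ℝ (Fin n) × EuclideanSpace ℝ (Fin n) =>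
          (‖f z.1 z.2 * g z.2‖₊ : ℝ≥0∞) ^ r :=
        (hf_meas.mul (hg_meas.comp measurable_snd)).enorm.pow_const r
      have hGpow : ∀ ξ, (eLpNorm (fun η => f (ξ - η) η * g η) p volume) ^ r
          = ∫⁻ η, (‖f (ξ - η) η * g η‖₊ : ℝ≥0∞) ^ r ∂volume := by
        intro ξ
        rw [eLpNorm_eq_lintegral_rpow_enorm_toReal hp0 hp_top, one_div,
          ENNReal.rpow_inv_rpow hpR.ne']; rfl
      have hfpow : ∀ η, (∫⁻ ζ, (‖f ζ η‖₊ : ℝ≥0∞) ^ r ∂volume)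
          ≤ (⨆ η', eLpNorm (fun ζ => f ζ η') p volume) ^ r := by
        intro η
        have h1 : (∫⁻ ζ, (‖f ζ η‖₊ : ℝ≥0∞) ^ r ∂volume)
            = (eLpNorm (fun ζ => f ζ η) p volume) ^ r := by
          rw [eLpNorm_eq_lintegral_rpow_enorm_toReal hp0 hp_top, one_div,
            ENNReal.rpow_inv_rpow hpR.ne']; rfl
        rw [h1]
        exact ENNReal.rpow_le_rpow (le_iSup (fun η' => eLpNorm (fun ζ => f ζ η') p volume) η) hpR.le
      have hgpow : (∫⁻ η, (‖g η‖₊ : ℝ≥0∞) ^ r ∂volume) = (eLpNorm g p volume) ^ r := by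
        rw [eLpNorm_eq_lintegral_rpow_enorm_toReal hp0 hp_top, one_div,
          ENNReal.rpow_inv_rpow hpR.ne']; rfl
      have hGmeas : Measurable fun ξ => ∫⁻ η, (‖f (ξ - η) η * g η‖₊ : ℝ≥0∞) ^ r ∂volume :=
        hwmeas.lintegral_prod_right'
      have hkey : (∫⁻ ξ, (eLpNorm (fun η => f (ξ - η) η * g η) p volume) ^ r ∂volume)
          ≤ ((⨆ η, eLpNorm (fun ζ => f ζ η) p volume) * eLpNorm g p volume) ^ r := by
        calc (∫⁻ ξ, (eLpNorm (fun η => f (ξ - η) η * g η) p volume) ^ r ∂volume)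
            = ∫⁻ ξ, ∫⁻ η, (‖f (ξ - η) η * g η‖₊ : ℝ≥0∞) ^ r ∂volume ∂volume := by
              exact lintegral_congr fun ξ => hGpow ξ
          _ = ∫⁻ z : EuclideanSpace ℝ (Fin n) × EuclideanSpace ℝ (Fin n),
                (‖f (z.1 - z.2) z.2 * g z.2‖₊ : ℝ≥0∞) ^ r ∂(volume.prod volume) :=
              (lintegral_prod _ hwmeas.aemeasurable).symm
          _ = ∫⁻ z : EuclideanSpace ℝ (Fin n) × EuclideanSpace ℝ (Fin n),
                (‖f z.1 z.2 * g z.2‖₊ : ℝ≥0∞) ^ r ∂(volume.prod volume) :=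
              (measurePreserving_sub_prod volume volume).lintegral_comp hwmeas'
          _ = ∫⁻ η, ∫⁻ ζ, (‖f ζ η * g η‖₊ : ℝ≥0∞) ^ r ∂volume ∂volume :=
              lintegral_prod_symm _ hwmeas'.aemeasurable
          _ ≤ ∫⁻ η, ((⨆ η', eLpNorm (fun ζ => f ζ η') p volume) ^ r) *
                (‖g η‖₊ : ℝ≥0∞) ^ r ∂volume := by
              refine lintegral_mono fun η => ?_
              calc (∫⁻ ζ, (‖f ζ η * g η‖₊ : ℝ≥0∞) ^ r ∂volume)
                  = ∫⁻ ζ, (‖f ζ η‖₊ : ℝ≥0∞) ^ r * (‖g η‖₊ : ℝ≥0∞) ^ r ∂volume := by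
                    refine lintegral_congr fun ζ => ?_
                    rw [nnnorm_mul, ENNReal.coe_mul, ENNReal.mul_rpow_of_nonneg _ _ hpR.le]
                _ = (∫⁻ ζ, (‖f ζ η‖₊ : ℝ≥0∞) ^ r ∂volume) * (‖g η‖₊ : ℝ≥0∞) ^ r :=
                    lintegral_mul_const _ ((hf_meas.comp
                      (measurable_id.prodMk measurable_const)).enorm.pow_const r)
                _ ≤ _ := mul_le_mul_left (hfpow η) _
          _ = ((⨆ η', eLpNorm (fun ζ => f ζ η') p volume) ^ r) *
                ∫⁻ η, (‖g η‖₊ : ℝ≥0∞) ^ r ∂volume :=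
              lintegral_const_mul _ (hg_meas.enorm.pow_const r)
          _ = _ := by rw [hgpow, ← ENNReal.mul_rpow_of_nonneg _ _ hpR.le]
      have hGr_meas : Measurable fun ξ =>
          (eLpNorm (fun η => f (ξ - η) η * g η) p volume) ^ r := by
        simp_rw [hGpow]
        exact hGmeas
      constructor
      · have h1 : (∫⁻ ξ, (eLpNorm (fun η => f (ξ - η) η * g η) p volume) ^ r ∂volume) ≠ ⊤ :=
          (lt_of_le_of_lt hkey (ENNReal.rpow_lt_top_of_nonneg hpR.le
            (ENNReal.mul_lt_top hA hg.2).ne)).ne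
        have h2 := ae_lt_top hGr_meas h1
        exact h2.mono fun ξ hξ => (ENNReal.rpow_lt_top_iff_of_pos hpR).mp hξ
      · rw [eLpNorm_eq_lintegral_rpow_enorm_toReal hp0 hp_top]
        calc (∫⁻ ξ, (‖∫ η, F ξ η * f (ξ - η) η * g η ∂volume‖₊ : ℝ≥0∞) ^ r ∂volume) ^ (1 / r)
            ≤ (∫⁻ ξ, ((⨆ ζ, eLpNorm (fun η => F ζ η) q volume) *
                eLpNorm (fun η => f (ξ - η) η * g η) p volume) ^ r ∂volume) ^ (1 / r) := by
              refine ENNReal.rpow_le_rpow (lintegral_mono fun ξ => ?_) (by positivity)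
              exact ENNReal.rpow_le_rpow (hTg_ptwise ξ) hpR.le
          _ = (((⨆ ζ, eLpNorm (fun η => F ζ η) q volume) ^ r) *
                ∫⁻ ξ, (eLpNorm (fun η => f (ξ - η) η * g η) p volume) ^ r ∂volume) ^ (1 / r) := by
              rw [← lintegral_const_mul _ hGr_meas]
              congr 1
              exact lintegral_congr fun ξ => ENNReal.mul_rpow_of_nonneg _ _ hpR.le
          _ ≤ (((⨆ ζ, eLpNorm (fun η => F ζ η) q volume) ^ r) *
                (((⨆ η, eLpNorm (fun ζ => f ζ η) p volume) * eLpNorm g p volume) ^ r)) ^ (1 / r) :=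
              ENNReal.rpow_le_rpow (mul_le_mul_right hkey _) (by positivity)
          _ = (⨆ ζ, eLpNorm (fun η => F ζ η) q volume) *
                ((⨆ η, eLpNorm (fun ζ => f ζ η) p volume) * eLpNorm g p volume) := by
              rw [← ENNReal.mul_rpow_of_nonneg _ _ hpR.le, one_div,
                ENNReal.rpow_rpow_inv hpR.ne']
          _ = (⨆ η, eLpNorm (fun ζ => f ζ η) p volume) *
                (⨆ ζ, eLpNorm (fun η => F ζ η) q volume) * eLpNorm g p volume := by ring
  obtain ⟨hfin, hbound⟩ := main
  have hint : ∀ᵐ ξ ∂(volume : Measure (EuclideanSpace ℝ (Fin n))),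
      Integrable (fun η => F ξ η * f (ξ - η) η * g η) volume := by
    refine hfin.mono fun ξ hξ => ?_
    refine ⟨(((hFξ ξ).mul (hfξ ξ)).mul hg_meas).aestronglyMeasurable, ?_⟩
    have h1 : (∫⁻ η, (‖F ξ η * f (ξ - η) η * g η‖₊ : ℝ≥0∞) ∂volume) < ⊤ :=
      lt_of_le_of_lt (hHolder ξ) (ENNReal.mul_lt_top hB hξ)
    exact h1
  have hK_meas : Measurable fun z : EuclideanSpace ℝ (Fin n) × EuclideanSpace ℝ (Fin n) =>
      F z.1 z.2 * f (z.1 - z.2) z.2 * g z.2 :=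
    (hF_meas.mul (hf_meas.comp ((measurable_fst.sub measurable_snd).prodMk measurable_snd))).mul
      (hg_meas.comp measurable_snd)
  have hTg_sm : AEStronglyMeasurable
      (fun ξ => ∫ η, F ξ η * f (ξ - η) η * g η ∂volume) volume :=
    (hK_meas.stronglyMeasurable.integral_prod_right').aestronglyMeasurable
  exact ⟨hint, ⟨hTg_sm, lt_of_le_of_lt hbound
    (ENNReal.mul_lt_top (ENNReal.mul_lt_top hA hB) hg.2)⟩, hbound⟩

/-- Boundedness on `L^p` of the integral operator
`Tg(ξ) = ∫ F(ξ,η) f(ξ-η,η) g(η) dη`, where `f ∈ 𝓛₁^{p,∞}` (i.e. `sup_η ‖f(·,η)‖_{L^p} < ∞`)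
and `F ∈ 𝓛₂^{∞,q}` (i.e. `sup_ζ ‖F(ζ,·)‖_{L^q} < ∞`), with `1/p + 1/q = 1`:
for each `g ∈ L^p`, the integral defining `Tg` converges for a.e. `ξ`, `Tg ∈ L^p`, and
`‖Tg‖_{L^p} ≤ A * B * ‖g‖_{L^p}` where `A`, `B` are the above mixed norms. -/
theorem integralOperator_Lp_bound {n : ℕ} (p q : ℝ≥0∞)
    (hp : 1 ≤ p) (hq : 1 ≤ q) (hpq : p⁻¹ + q⁻¹ = 1)
    (f F : EuclideanSpace ℝ (Fin n) → EuclideanSpace ℝ (Fin n) → ℂ)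
    (hf_meas : Measurable (Function.uncurry f))
    (hF_meas : Measurable (Function.uncurry F))
    (hA : (⨆ η, eLpNorm (fun ζ => f ζ η) p volume) < ⊤)
    (hB : (⨆ ζ, eLpNorm (fun η => F ζ η) q volume) < ⊤)
    (g : EuclideanSpace ℝ (Fin n) → ℂ) (hg : MemLp g p volume) :
    (∀ᵐ ξ ∂volume, Integrable (fun η => F ξ η * f (ξ - η) η * g η) volume) ∧
    MemLp (fun ξ => ∫ η, F ξ η * f (ξ - η) η * g η ∂volume) p volume ∧
    eLpNorm (fun ξ => ∫ η, F ξ η * f (ξ - η) η * g η ∂volume) p volume ≤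
      (⨆ η, eLpNorm (fun ζ => f ζ η) p volume) *
      (⨆ ζ, eLpNorm (fun η => F ζ η) q volume) * eLpNorm g p volume := by
  obtain ⟨g', hg'_sm, hgg'⟩ : ∃ g', StronglyMeasurable g' ∧ g =ᵐ[volume] g' :=
    ⟨hg.1.mk g, hg.1.stronglyMeasurable_mk, hg.1.ae_eq_mk⟩
  have hg' : MemLp g' p volume := hg.ae_eq hgg'
  obtain ⟨hint', hmem', hbound'⟩ := integralOperator_Lp_bound_aux p q hp hq hpq f F
    hf_meas hF_meas hA hB g' hg'_sm.measurable hg'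
  have hTg_eq : ∀ ξ, (∫ η, F ξ η * f (ξ - η) η * g η ∂volume)
      = ∫ η, F ξ η * f (ξ - η) η * g' η ∂volume := fun ξ =>
    integral_congr_ae (hgg'.mono fun η hη => by simp only [hη])
  have hTg_funext : (fun ξ => ∫ η, F ξ η * f (ξ - η) η * g η ∂volume)
      = fun ξ => ∫ η, F ξ η * f (ξ - η) η * g' η ∂volume := funext hTg_eq
  have hgnorm : eLpNorm g p volume = eLpNorm g' p volume := eLpNorm_congr_ae hgg'
  refine ⟨?_, ?_, ?_⟩
  · refine hint'.mono fun ξ hξ => ?_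
    exact hξ.congr (hgg'.mono fun η hη => by simp only [hη])
  · rw [hTg_funext]; exact hmem'
  · rw [hTg_funext, hgnorm]; exact hbound'
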